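/- (Theorem 1, second bound.) The squared 2-Wasserstein distance between the posterior conditioned on the full dataset and the prior, integrated over the domain of future predictions, is bounded as ∫_S ∫_{t₀}^{+∞} [μ_D(x,t)² + (√λ − σ_D(x,t))²] dt dx ≤ λ²·(yᵀΔ⁻¹ C Δ⁻¹ y + Tr(Δ⁻¹ C)), where C is the n×n matrix with entries C_{ij} = (k_S⋆k_S)(x_j − x_i)·(k_T⋆k_T)_{t₀−t_i}^{+∞}(t_j − t_i). -/

import Mathlib

open Matrix MeasureTheory

/-- Theorem 1, second bound: the squared 2-Wasserstein distance between the posterior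
conditioned on the full dataset and the prior, integrated over the domain of future
predictions, is bounded by `λ²(yᵀΔ⁻¹CΔ⁻¹y + Tr(Δ⁻¹C))`. -/
theorem stmt_11
    (d n : ℕ) (hd : 1 ≤ d) (hn : 1 ≤ n)
    (lam sig : ℝ) (hlam : 0 < lam) (hsig : 0 < sig)
    (kS kT : ℝ → ℝ)
    (hkSmeas : Measurable kS) (hkTmeas : Measurable kT)
    (hkSrange : ∀ r, kS r ∈ Set.Icc (0 : ℝ) 1) (hkTrange : ∀ r, kT r ∈ Set.Icc (0 : ℝ) 1)
    (hkS0 : kS 0 = 1) (hkT0 : kT 0 = 1)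
    (k : (EuclideanSpace ℝ (Fin d) × ℝ) → (EuclideanSpace ℝ (Fin d) × ℝ) → ℝ)
    (hk : ∀ p q, k p q = lam * kS (‖p.1 - q.1‖) * kT (|p.2 - q.2|))
    (pts : Fin n → EuclideanSpace ℝ (Fin d) × ℝ)
    (y : Fin n → ℝ)
    (Δ : Matrix (Fin n) (Fin n) ℝ)
    (hΔ : ∀ i j, Δ i j = k (pts i) (pts j) + sig ^ 2 * (if i = j then 1 else 0))
    (hPD : Δ.PosDef)
    (μD : (EuclideanSpace ℝ (Fin d) × ℝ) → ℝ)
    (hμD : ∀ p, μD p = (fun i : Fin n => k p (pts i)) ⬝ᵥ Δ⁻¹ *ᵥ y)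
    (σ2D : (EuclideanSpace ℝ (Fin d) × ℝ) → ℝ)
    (hσ2D : ∀ p, σ2D p = lam -
      (fun i : Fin n => k p (pts i)) ⬝ᵥ Δ⁻¹ *ᵥ (fun i : Fin n => k p (pts i)))
    (hborder : ∀ p : EuclideanSpace ℝ (Fin d) × ℝ,
      (Matrix.fromBlocks
        (Matrix.of fun (_ : Fin 1) (_ : Fin 1) => lam)
        (Matrix.of fun (_ : Fin 1) (j : Fin n) => k p (pts j))
        (Matrix.of fun (i : Fin n) (_ : Fin 1) => k p (pts i))
        Δ).PosSemidef)
    (σD : (EuclideanSpace ℝ (Fin d) × ℝ) → ℝ)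
    (hσD : ∀ p, σD p = Real.sqrt (σ2D p))
    (convS : EuclideanSpace ℝ (Fin d) → ℝ)
    (hconvS : ∀ v, convS v = ∫ u : EuclideanSpace ℝ (Fin d), kS ‖u‖ * kS ‖v - u‖)
    (convT : ℝ → ℝ → ℝ)
    (hconvT : ∀ a' s, convT a' s = ∫ τ in Set.Ioi a', kT |τ| * kT |s - τ|)
    (hintS : ∀ v : EuclideanSpace ℝ (Fin d),
      Integrable (fun u : EuclideanSpace ℝ (Fin d) => kS ‖u‖ * kS ‖v - u‖))
    (hintT : ∀ a' s : ℝ, IntegrableOn (fun τ => kT |τ| * kT |s - τ|) (Set.Ioi a'))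
    (t0 : ℝ) (S : Set (EuclideanSpace ℝ (Fin d))) (hS : MeasurableSet S)
    (C : Matrix (Fin n) (Fin n) ℝ)
    (hC : ∀ i j, C i j =
      convS ((pts j).1 - (pts i).1) * convT (t0 - (pts i).2) ((pts j).2 - (pts i).2)) :
    (∫ x in S, ∫ t in Set.Ioi t0,
        ((μD (x, t)) ^ 2 + (Real.sqrt lam - σD (x, t)) ^ 2))
      ≤ lam ^ 2 * ((y ⬝ᵥ (Δ⁻¹ * C * Δ⁻¹) *ᵥ y) + (Δ⁻¹ * C).trace) := by
  
  classical
  -- abbreviations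
  set b : Fin n → ℝ := Δ⁻¹ *ᵥ y with hbdef
  set q : Fin n → Fin n → ℝ := fun i j => b i * b j + Δ⁻¹ i j with hqdef
  set T : Fin n → Fin n → ℝ :=
    fun i j => convT (t0 - (pts i).2) ((pts j).2 - (pts i).2) with hTdef
  -- the dominating function and its partial integral
  set G2 : EuclideanSpace ℝ (Fin d) → ℝ → ℝ := fun x t => ∑ ij : Fin n × Fin n,
      (q ij.1 ij.2 * lam ^ 2 * (kS ‖x - (pts ij.1).1‖ * kS ‖x - (pts ij.2).1‖)) *
        (kT |t - (pts ij.1).2| * kT |t - (pts ij.2).2|) with hG2def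
  set H : EuclideanSpace ℝ (Fin d) → ℝ := fun x => ∑ ij : Fin n × Fin n,
      (q ij.1 ij.2 * lam ^ 2 * T ij.1 ij.2) *
        (kS ‖x - (pts ij.1).1‖ * kS ‖x - (pts ij.2).1‖) with hHdef
  -- symmetry of Δ and Δ⁻¹
  haveI : Invertible Δ := invertibleOfIsUnitDet Δ (isUnit_iff_ne_zero.mpr (ne_of_gt hPD.det_pos))
  have hΔT : Δᵀ = Δ := by
    ext i j
    rw [Matrix.transpose_apply, hΔ, hΔ, hk, hk, norm_sub_rev, abs_sub_comm]
    simp [eq_comm]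
  have hinvT : Δ⁻¹ᵀ = Δ⁻¹ := by rw [Matrix.transpose_nonsing_inv, hΔT]
  have hinvsymm : ∀ i j, Δ⁻¹ i j = Δ⁻¹ j i := by
    intro i j
    have h := congrFun (congrFun hinvT j) i
    simpa [Matrix.transpose_apply] using h
  have hinvPSD : ∀ v : Fin n → ℝ, 0 ≤ v ⬝ᵥ Δ⁻¹ *ᵥ v := by
    intro v
    simpa using hPD.inv.posSemidef.dotProduct_mulVec_nonneg v
  -- σ2D is in [0, lam]
  have hσ2_le : ∀ p, σ2D p ≤ lam := by
    intro p
    rw [hσ2D]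
    have := hinvPSD (fun i : Fin n => k p (pts i))
    linarith
  have hσ2_nonneg : ∀ p, 0 ≤ σ2D p := by
    intro p
    have hb' := hborder p
    have hB : (Matrix.of fun (i : Fin n) (_ : Fin 1) => k p (pts i)) =
        (Matrix.of fun (_ : Fin 1) (j : Fin n) => k p (pts j))ᴴ := by
      ext i j; simp
    rw [hB] at hb'
    rw [Matrix.PosDef.fromBlocks₂₂ _ _ hPD] at hb'
    have h := hb'.dotProduct_mulVec_nonneg (fun _ => (1:ℝ))
    rw [hσ2D]
    simp only [Matrix.sub_apply, Matrix.mul_apply, dotProduct, Matrix.mulVec, Matrix.of_apply,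
      Fin.sum_univ_one, star_one, one_mul, mul_one, Pi.sub_apply, conjTranspose_apply,
      star_trivial, Pi.star_apply] at h ⊢
    have key : ∑ x, (∑ x1, k p (pts x1) * Δ⁻¹ x1 x) * k p (pts x) =
        ∑ x, k p (pts x) * ∑ x1, Δ⁻¹ x x1 * k p (pts x1) := by
      simp_rw [Finset.sum_mul, Finset.mul_sum]
      rw [Finset.sum_comm]
      exact Finset.sum_congr rfl fun i _ => Finset.sum_congr rfl fun j _ => by ring
    linarith [h, key]
  -- pointwise: the integrand is bounded by G2
  have hG2eq : ∀ (x : EuclideanSpace ℝ (Fin d)) (t : ℝ), G2 x t = μD (x, t) ^ 2 +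
      (fun i : Fin n => k (x, t) (pts i)) ⬝ᵥ Δ⁻¹ *ᵥ (fun i : Fin n => k (x, t) (pts i)) := by
    intro x t
    rw [hμD]
    simp only [hG2def, hqdef, dotProduct, Matrix.mulVec, ← hbdef]
    rw [pow_two (∑ i : Fin n, k (x, t) (pts i) * b i), Finset.sum_mul_sum]
    simp only [Finset.mul_sum]
    rw [← Finset.sum_add_distrib, Fintype.sum_prod_type]
    refine Finset.sum_congr rfl fun i _ => ?_
    rw [← Finset.sum_add_distrib]
    refine Finset.sum_congr rfl fun j _ => ?_
    simp only [hk]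
    ring
  have hf0 : ∀ p : EuclideanSpace ℝ (Fin d) × ℝ, 0 ≤ μD p ^ 2 + (Real.sqrt lam - σD p) ^ 2 := by
    intro p; positivity
  have hfle : ∀ (x : EuclideanSpace ℝ (Fin d)) (t : ℝ),
      μD (x, t) ^ 2 + (Real.sqrt lam - σD (x, t)) ^ 2 ≤ G2 x t := by
    intro x t
    rw [hG2eq x t]
    have h2 : (Real.sqrt lam - σD (x, t)) ^ 2 ≤ lam - σ2D (x, t) := by
      rw [hσD]
      have h0 := hσ2_nonneg (x, t)
      have hle := hσ2_le (x, t)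
      have e1 : Real.sqrt (σ2D (x, t)) * Real.sqrt (σ2D (x, t)) = σ2D (x, t) :=
        Real.mul_self_sqrt h0
      have e2 : Real.sqrt lam * Real.sqrt lam = lam := Real.mul_self_sqrt hlam.le
      have e3 : Real.sqrt (σ2D (x, t)) ≤ Real.sqrt lam := Real.sqrt_le_sqrt hle
      have e4 : 0 ≤ Real.sqrt (σ2D (x, t)) := Real.sqrt_nonneg _
      nlinarith
    have h3 : lam - σ2D (x, t) =
        (fun i : Fin n => k (x, t) (pts i)) ⬝ᵥ Δ⁻¹ *ᵥ (fun i : Fin n => k (x, t) (pts i)) := by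
      rw [hσ2D]; ring
    linarith
  have hG2nonneg : ∀ (x : EuclideanSpace ℝ (Fin d)) (t : ℝ), 0 ≤ G2 x t := by
    intro x t
    rw [hG2eq x t]
    have := hinvPSD (fun i : Fin n => k (x, t) (pts i))
    positivity
  -- measurability of the integrand
  have hkmeas : ∀ i : Fin n, Measurable (fun p : EuclideanSpace ℝ (Fin d) × ℝ => k p (pts i)) := by
    intro i
    simp only [hk]
    exact (measurable_const.mul (hkSmeas.comp
      ((continuous_fst.sub continuous_const).norm.measurable))).mul
      (hkTmeas.comp ((continuous_snd.sub continuous_const).abs.measurable))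
  have hmeasμ : Measurable μD := by
    have : μD = fun p : EuclideanSpace ℝ (Fin d) × ℝ => ∑ i : Fin n, k p (pts i) * b i := by
      funext p
      rw [hμD]
      simp [dotProduct, hbdef]
    rw [this]
    exact Finset.measurable_sum _ fun i _ => (hkmeas i).mul measurable_const
  have hmeasσ2 : Measurable σ2D := by
    have : σ2D = fun p : EuclideanSpace ℝ (Fin d) × ℝ =>
        lam - ∑ i : Fin n, k p (pts i) * ∑ j : Fin n, Δ⁻¹ i j * k p (pts j) := by
      funext p
      rw [hσ2D]
      simp [dotProduct, Matrix.mulVec]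
    rw [this]
    exact measurable_const.sub (Finset.measurable_sum _ fun i _ => (hkmeas i).mul
      (Finset.measurable_sum _ fun j _ => measurable_const.mul (hkmeas j)))
  have hmeasf : Measurable (fun p : EuclideanSpace ℝ (Fin d) × ℝ => μD p ^ 2 + (Real.sqrt lam - σD p) ^ 2) := by
    have hσDm : Measurable σD := by
      have : σD = fun p => Real.sqrt (σ2D p) := funext hσD
      rw [this]
      exact Real.continuous_sqrt.measurable.comp hmeasσ2
    exact (hmeasμ.pow_const 2).add ((measurable_const.sub hσDm).pow_const 2)
  -- temporal integrals
  have timeInt : ∀ i j : Fin n,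
      IntegrableOn (fun t => kT |t - (pts i).2| * kT |t - (pts j).2|) (Set.Ioi t0) ∧
      (∫ t in Set.Ioi t0, kT |t - (pts i).2| * kT |t - (pts j).2|) = T i j := by
    intro i j
    have hmp : MeasurePreserving (fun τ : ℝ => τ + (pts i).2) volume volume :=
      measurePreserving_add_right volume (pts i).2
    have hemb : MeasurableEmbedding (fun τ : ℝ => τ + (pts i).2) :=
      (Homeomorph.addRight (pts i).2).measurableEmbedding
    have hpre : (fun τ : ℝ => τ + (pts i).2) ⁻¹' (Set.Ioi t0) = Set.Ioi (t0 - (pts i).2) := by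
      ext τ; simp [sub_lt_iff_lt_add]
    have hkey : ∀ τ : ℝ, kT |τ + (pts i).2 - (pts i).2| * kT |τ + (pts i).2 - (pts j).2| =
        kT |τ| * kT |((pts j).2 - (pts i).2) - τ| := by
      intro τ
      rw [show τ + (pts i).2 - (pts i).2 = τ by ring,
        show ((pts j).2 - (pts i).2) - τ = -(τ + (pts i).2 - (pts j).2) by ring, abs_neg]
    constructor
    · have h1 : IntegrableOn
          (fun τ => kT |τ + (pts i).2 - (pts i).2| * kT |τ + (pts i).2 - (pts j).2|)
          ((fun τ : ℝ => τ + (pts i).2) ⁻¹' (Set.Ioi t0)) := by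
        rw [hpre]
        have := hintT (t0 - (pts i).2) ((pts j).2 - (pts i).2)
        refine this.congr_fun ?_ measurableSet_Ioi
        intro τ _
        exact (hkey τ).symm
      exact (hmp.integrableOn_comp_preimage hemb).mp h1
    · rw [← hmp.setIntegral_preimage_emb hemb
        (fun t => kT |t - (pts i).2| * kT |t - (pts j).2|) (Set.Ioi t0), hpre]
      rw [hTdef]
      simp only
      rw [hconvT]
      refine setIntegral_congr_fun measurableSet_Ioi fun τ _ => ?_
      exact hkey τ
  -- spatial integrals
  have spaceInt : ∀ i j : Fin n,
      Integrable (fun x : EuclideanSpace ℝ (Fin d) => kS ‖x - (pts i).1‖ * kS ‖x - (pts j).1‖) ∧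
      (∫ x : EuclideanSpace ℝ (Fin d), kS ‖x - (pts i).1‖ * kS ‖x - (pts j).1‖) = convS ((pts j).1 - (pts i).1) := by
    intro i j
    have hkey : ∀ x : EuclideanSpace ℝ (Fin d), kS ‖x - (pts i).1‖ * kS ‖x - (pts j).1‖ =
        kS ‖x - (pts i).1‖ * kS ‖((pts j).1 - (pts i).1) - (x - (pts i).1)‖ := by
      intro x
      have h1 : ((pts j).1 - (pts i).1) - (x - (pts i).1) = (pts j).1 - x := by abel
      rw [h1, norm_sub_rev x (pts j).1]
    have hmp : MeasurePreserving (fun x : EuclideanSpace ℝ (Fin d) => x - (pts i).1) volume volume := by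
      simpa [sub_eq_add_neg] using
        measurePreserving_add_right (volume : Measure (EuclideanSpace ℝ (Fin d))) (-(pts i).1)
    have hemb : MeasurableEmbedding (fun x : EuclideanSpace ℝ (Fin d) => x - (pts i).1) :=
      (Homeomorph.subRight (pts i).1).measurableEmbedding
    constructor
    · have h1 : Integrable ((fun u : EuclideanSpace ℝ (Fin d) => kS ‖u‖ * kS ‖((pts j).1 - (pts i).1) - u‖) ∘
          (fun x : EuclideanSpace ℝ (Fin d) => x - (pts i).1)) :=
        (hmp.integrable_comp_emb hemb).mpr (hintS ((pts j).1 - (pts i).1))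
      refine h1.congr (Filter.Eventually.of_forall fun x => ?_)
      exact (hkey x).symm
    · calc (∫ x : EuclideanSpace ℝ (Fin d), kS ‖x - (pts i).1‖ * kS ‖x - (pts j).1‖)
          = ∫ x : EuclideanSpace ℝ (Fin d), (fun u : EuclideanSpace ℝ (Fin d) => kS ‖u‖ * kS ‖((pts j).1 - (pts i).1) - u‖) (x - (pts i).1) := by
            refine integral_congr_ae (Filter.Eventually.of_forall fun x => ?_)
            exact hkey x
        _ = ∫ u : EuclideanSpace ℝ (Fin d), kS ‖u‖ * kS ‖((pts j).1 - (pts i).1) - u‖ := by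
            simpa [sub_eq_add_neg] using
              integral_add_right_eq_self
                (fun u : EuclideanSpace ℝ (Fin d) => kS ‖u‖ * kS ‖((pts j).1 - (pts i).1) - u‖) (-(pts i).1)
        _ = convS ((pts j).1 - (pts i).1) := (hconvS _).symm
  -- inner integrability and value
  have intG2x : ∀ x : EuclideanSpace ℝ (Fin d), IntegrableOn (G2 x) (Set.Ioi t0) := by
    intro x
    rw [hG2def]
    exact integrable_finset_sum _ fun ij _ => ((timeInt ij.1 ij.2).1).const_mul _
  have hHval : ∀ x : EuclideanSpace ℝ (Fin d), (∫ t in Set.Ioi t0, G2 x t) = H x := by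
    intro x
    rw [hG2def, hHdef]
    simp only
    rw [integral_finset_sum _ fun ij _ => ((timeInt ij.1 ij.2).1).const_mul _]
    refine Finset.sum_congr rfl fun ij _ => ?_
    rw [integral_const_mul, (timeInt ij.1 ij.2).2]
    ring
  have intH : Integrable H := by
    rw [hHdef]
    exact integrable_finset_sum _ fun ij _ => ((spaceInt ij.1 ij.2).1).const_mul _
  have hHnonneg : ∀ x : EuclideanSpace ℝ (Fin d), 0 ≤ H x := by
    intro x
    rw [← hHval x]
    exact setIntegral_nonneg measurableSet_Ioi fun t _ => hG2nonneg x t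
  -- inner integral comparison
  have hAB : ∀ x : EuclideanSpace ℝ (Fin d),
      (∫ t in Set.Ioi t0, (μD (x, t) ^ 2 + (Real.sqrt lam - σD (x, t)) ^ 2)) ≤ H x := by
    intro x
    rw [← hHval x]
    have hmx : AEStronglyMeasurable
        (fun t => μD (x, t) ^ 2 + (Real.sqrt lam - σD (x, t)) ^ 2)
        (volume.restrict (Set.Ioi t0)) :=
      ((hmeasf.comp (measurable_prodMk_left : Measurable (fun t : ℝ => (x, t)))).aestronglyMeasurable)
    have hintfx : IntegrableOn (fun t => μD (x, t) ^ 2 + (Real.sqrt lam - σD (x, t)) ^ 2)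
        (Set.Ioi t0) := by
      refine Integrable.mono (intG2x x) hmx (Filter.Eventually.of_forall fun t => ?_)
      rw [Real.norm_eq_abs, Real.norm_eq_abs, abs_of_nonneg (hf0 (x, t)),
        abs_of_nonneg (hG2nonneg x t)]
      exact hfle x t
    exact integral_mono hintfx (intG2x x) fun t => hfle x t
  have hA0 : ∀ x : EuclideanSpace ℝ (Fin d), 0 ≤ ∫ t in Set.Ioi t0, (μD (x, t) ^ 2 + (Real.sqrt lam - σD (x, t)) ^ 2) :=
    fun x => setIntegral_nonneg measurableSet_Ioi fun t _ => hf0 (x, t)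
  -- outer integral comparison
  have hAmeas : StronglyMeasurable
      (fun x : EuclideanSpace ℝ (Fin d) => ∫ t in Set.Ioi t0, (μD (x, t) ^ 2 + (Real.sqrt lam - σD (x, t)) ^ 2)) :=
    (hmeasf.stronglyMeasurable).integral_prod_right'
  have intA_S : IntegrableOn
      (fun x : EuclideanSpace ℝ (Fin d) => ∫ t in Set.Ioi t0, (μD (x, t) ^ 2 + (Real.sqrt lam - σD (x, t)) ^ 2)) S := by
    refine Integrable.mono intH.integrableOn hAmeas.aestronglyMeasurable
      (Filter.Eventually.of_forall fun x => ?_)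
    rw [Real.norm_eq_abs, Real.norm_eq_abs, abs_of_nonneg (hA0 x), abs_of_nonneg (hHnonneg x)]
    exact hAB x
  have step1 : (∫ x in S, ∫ t in Set.Ioi t0,
      (μD (x, t) ^ 2 + (Real.sqrt lam - σD (x, t)) ^ 2)) ≤ ∫ x in S, H x :=
    setIntegral_mono_on intA_S intH.integrableOn hS fun x _ => hAB x
  have step2 : (∫ x in S, H x) ≤ ∫ x : EuclideanSpace ℝ (Fin d), H x :=
    setIntegral_le_integral intH (Filter.Eventually.of_forall hHnonneg)
  -- value of the full integral of H
  have hHint : (∫ x : EuclideanSpace ℝ (Fin d), H x) = ∑ ij : Fin n × Fin n, q ij.1 ij.2 * (lam ^ 2 * C ij.1 ij.2) := by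
    rw [hHdef]
    rw [integral_finset_sum _ fun ij _ => ((spaceInt ij.1 ij.2).1).const_mul _]
    refine Finset.sum_congr rfl fun ij _ => ?_
    rw [integral_const_mul, (spaceInt ij.1 ij.2).2, hC ij.1 ij.2, hTdef]
    ring
  -- final algebra
  have hfinal : (∑ ij : Fin n × Fin n, q ij.1 ij.2 * (lam ^ 2 * C ij.1 ij.2)) =
      lam ^ 2 * ((y ⬝ᵥ (Δ⁻¹ * C * Δ⁻¹) *ᵥ y) + (Δ⁻¹ * C).trace) := by
    have hquad : y ⬝ᵥ (Δ⁻¹ * C * Δ⁻¹) *ᵥ y = ∑ i : Fin n, ∑ j : Fin n, b i * C i j * b j := by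
      rw [← Matrix.mulVec_mulVec, ← Matrix.mulVec_mulVec, Matrix.dotProduct_mulVec]
      have : Matrix.vecMul y Δ⁻¹ = b := by
        rw [← hinvT, Matrix.vecMul_transpose, hbdef]
      rw [this]
      simp only [dotProduct, Matrix.mulVec, hbdef]
      refine Finset.sum_congr rfl fun i _ => ?_
      rw [Finset.mul_sum]
      refine Finset.sum_congr rfl fun j _ => ?_
      ring
    have htr : (Δ⁻¹ * C).trace = ∑ i : Fin n, ∑ j : Fin n, Δ⁻¹ i j * C i j := by
      rw [Matrix.trace]
      simp only [Matrix.diag, Matrix.mul_apply]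
      rw [Finset.sum_comm]
      refine Finset.sum_congr rfl fun i _ => Finset.sum_congr rfl fun j _ => ?_
      rw [hinvsymm i j]
    rw [hquad, htr, mul_add, Finset.mul_sum, Finset.mul_sum, ← Finset.sum_add_distrib,
      Fintype.sum_prod_type]
    refine Finset.sum_congr rfl fun i _ => ?_
    rw [Finset.mul_sum, Finset.mul_sum, ← Finset.sum_add_distrib]
    refine Finset.sum_congr rfl fun j _ => ?_
    rw [hqdef]
    ring
  calc (∫ x in S, ∫ t in Set.Ioi t0, (μD (x, t) ^ 2 + (Real.sqrt lam - σD (x, t)) ^ 2))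
      ≤ ∫ x in S, H x := step1
    _ ≤ ∫ x : EuclideanSpace ℝ (Fin d), H x := step2
    _ = lam ^ 2 * ((y ⬝ᵥ (Δ⁻¹ * C * Δ⁻¹) *ᵥ y) + (Δ⁻¹ * C).trace) := by rw [hHint, hfinal]
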